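/- Let ρ, δ > 0, set ε = (δ²ρ)^{1/3} and r = (δ/ρ)^{1/3}, and let f : ℝ^d → ℝ be twice continuously differentiable with a ρ-Lipschitz Hessian. Let x ∈ ℝ^d satisfy ‖∇f(x)‖ < ε and ⟨h, ∇²f(x)·h⟩ ≥ −√(ρε)·‖h‖² for all h ∈ ℝ^d (note √(ρε) = (δρ²)^{1/3}). Then for every h with ‖h‖ ≤ r, f(x + h) − f(x) ≥ −2δ. -/

import Mathlib

open scoped RealInnerProductSpace

set_option maxHeartbeats 1000000 in
/-- For `ε = (δ²ρ)^{1/3}`, `r = (δ/ρ)^{1/3}`, a function with `ρ`-Lipschitz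
Hessian, a point with `‖∇f(x)‖ < ε` and `⟨h, ∇²f(x) h⟩ ≥ −√(ρε)‖h‖²` for all `h`
satisfies `f(x + h) − f(x) ≥ −2δ` for all `h` with `‖h‖ ≤ r`. -/
theorem stmt9 (d : ℕ) (ρ δ : ℝ) (hρ : 0 < ρ) (hδ : 0 < δ)
    (ε r : ℝ) (hε : ε = (δ ^ 2 * ρ) ^ ((1 : ℝ) / 3)) (hr : r = (δ / ρ) ^ ((1 : ℝ) / 3))
    (f : EuclideanSpace ℝ (Fin d) → ℝ) (hf : ContDiff ℝ 2 f)
    (hlip : ∀ x y : EuclideanSpace ℝ (Fin d),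
      ‖fderiv ℝ (gradient f) x - fderiv ℝ (gradient f) y‖ ≤ ρ * ‖x - y‖)
    (x : EuclideanSpace ℝ (Fin d)) (hgrad : ‖gradient f x‖ < ε)
    (hhess : ∀ h : EuclideanSpace ℝ (Fin d),
      ⟪h, fderiv ℝ (gradient f) x h⟫ ≥ -Real.sqrt (ρ * ε) * ‖h‖ ^ 2) :
    ∀ h : EuclideanSpace ℝ (Fin d), ‖h‖ ≤ r → f (x + h) - f x ≥ -2 * δ := by
  have hfd : Differentiable ℝ f := hf.differentiable (by norm_num)
  have hgc : ContDiff ℝ 1 (gradient f) := by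
    have h1 : ContDiff ℝ 1 (fderiv ℝ f) := hf.fderiv_right (by norm_num)
    have hL : IsBoundedLinearMap ℝ
        (fun ℓ : StrongDual ℝ (EuclideanSpace ℝ (Fin d)) =>
          (InnerProductSpace.toDual ℝ (EuclideanSpace ℝ (Fin d))).symm ℓ) := by
      refine ⟨⟨fun a b => map_add _ a b, fun c ℓ => ?_⟩, 1, one_pos, fun ℓ => ?_⟩
      · have := (InnerProductSpace.toDual ℝ
          (EuclideanSpace ℝ (Fin d))).symm.map_smulₛₗ c ℓ
        simp only [starRingEnd_apply, star_trivial] at this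
        exact this
      · simp
    exact hL.contDiff.comp h1
  have hgd : Differentiable ℝ (gradient f) := hgc.differentiable (by norm_num)
  intro h hh
  -- derivative of the curve
  have hc : ∀ t : ℝ, HasDerivAt (fun s : ℝ => x + s • h) h t := by
    intro t
    simpa using ((hasDerivAt_id t).smul_const h).const_add x
  have hφ : ∀ t : ℝ, HasDerivAt (fun s : ℝ => f (x + s • h))
      ⟪gradient f (x + t • h), h⟫ t := by
    intro t
    have h1 : HasFDerivAt f (InnerProductSpace.toDual ℝ _ (gradient f (x + t • h)))
        (x + t • h) := ((hfd (x + t • h)).hasGradientAt).hasFDerivAt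
    refine (h1.comp_hasDerivAt t (hc t)).congr_deriv ?_
    simp
  have hγ : ∀ t : ℝ, HasDerivAt (fun s : ℝ => gradient f (x + s • h))
      (fderiv ℝ (gradient f) (x + t • h) h) t := by
    intro t
    exact ((hgd (x + t • h)).hasFDerivAt).comp_hasDerivAt t (hc t)
  set H : EuclideanSpace ℝ (Fin d) →L[ℝ] EuclideanSpace ℝ (Fin d) :=
    fderiv ℝ (gradient f) x with hH
  -- key MVT bound
  have key : ∀ t ∈ Set.Icc (0:ℝ) 1,
      ‖gradient f (x + t • h) - gradient f x - t • H h‖ ≤ ρ * t ^ 2 * ‖h‖ ^ 2 := by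
    intro t ht
    have hg' : ∀ s ∈ Set.Icc (0:ℝ) t, HasDerivWithinAt
        (fun u : ℝ => gradient f (x + u • h) - u • H h)
        (fderiv ℝ (gradient f) (x + s • h) h - H h) (Set.Icc 0 t) s := by
      intro s _
      have h2 : HasDerivAt (fun u : ℝ => u • H h) (H h) s := by
        simpa using (hasDerivAt_id s).smul_const (H h)
      exact ((hγ s).sub h2).hasDerivWithinAt
    have hb : ∀ s ∈ Set.Icc (0:ℝ) t,
        ‖fderiv ℝ (gradient f) (x + s • h) h - H h‖ ≤ ρ * t * ‖h‖ ^ 2 := by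
      intro s hs
      have hl := hlip (x + s • h) x
      have e1 : ‖fderiv ℝ (gradient f) (x + s • h) h - H h‖
          = ‖(fderiv ℝ (gradient f) (x + s • h) - H) h‖ := by simp
      rw [e1]
      calc ‖(fderiv ℝ (gradient f) (x + s • h) - H) h‖
          ≤ ‖fderiv ℝ (gradient f) (x + s • h) - H‖ * ‖h‖ :=
            ContinuousLinearMap.le_opNorm _ _
        _ ≤ (ρ * ‖x + s • h - x‖) * ‖h‖ := by gcongr
        _ = ρ * (s * ‖h‖) * ‖h‖ := by
            rw [add_sub_cancel_left, norm_smul, Real.norm_eq_abs, abs_of_nonneg hs.1]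
        _ ≤ ρ * (t * ‖h‖) * ‖h‖ := by
            have h1 := hs.2
            have h2 := norm_nonneg h
            gcongr
        _ = ρ * t * ‖h‖ ^ 2 := by ring
    have hm := Convex.norm_image_sub_le_of_norm_hasDerivWithin_le hg' hb (convex_Icc 0 t)
      (Set.left_mem_Icc.mpr ht.1) (Set.right_mem_Icc.mpr ht.1)
    simp only [zero_smul, add_zero, sub_zero] at hm
    have e3 : gradient f (x + t • h) - t • H h - gradient f x
        = gradient f (x + t • h) - gradient f x - t • H h := by abel
    rw [e3] at hm
    calc ‖gradient f (x + t • h) - gradient f x - t • H h‖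
        ≤ ρ * t * ‖h‖ ^ 2 * ‖t‖ := hm
      _ = ρ * t ^ 2 * ‖h‖ ^ 2 := by
          rw [Real.norm_eq_abs, abs_of_nonneg ht.1]; ring
  -- the auxiliary function ψ
  set a : ℝ := ⟪gradient f x, h⟫ with ha
  set b : ℝ := ⟪h, H h⟫ with hb
  set ψ : ℝ → ℝ := fun t => f (x + t • h) - f x - t * a - t ^ 2 / 2 * b
      + ρ * ‖h‖ ^ 3 / 3 * t ^ 3 with hψdef
  have hψ' : ∀ t : ℝ, HasDerivAt ψ
      (⟪gradient f (x + t • h), h⟫ - a - t * b + ρ * ‖h‖ ^ 3 * t ^ 2) t := by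
    intro t
    have h1 := hφ t
    have h2 : HasDerivAt (fun s : ℝ => s * a) a t := by
      simpa using (hasDerivAt_id t).mul_const a
    have h3 : HasDerivAt (fun s : ℝ => s ^ 2 / 2 * b) (t * b) t := by
      have := ((hasDerivAt_pow 2 t).div_const 2).mul_const b
      refine this.congr_deriv ?_
      push_cast; ring
    have h4 : HasDerivAt (fun s : ℝ => ρ * ‖h‖ ^ 3 / 3 * s ^ 3)
        (ρ * ‖h‖ ^ 3 * t ^ 2) t := by
      have := (hasDerivAt_pow 3 t).const_mul (ρ * ‖h‖ ^ 3 / 3)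
      refine this.congr_deriv ?_
      push_cast; ring
    exact (((h1.sub_const (f x)).sub h2).sub h3).add h4
  have mono : MonotoneOn ψ (Set.Icc (0:ℝ) 1) := by
    apply monotoneOn_of_deriv_nonneg (convex_Icc 0 1)
    · exact fun t _ => (hψ' t).continuousAt.continuousWithinAt
    · exact fun t _ => (hψ' t).differentiableAt.differentiableWithinAt
    · intro t ht
      rw [interior_Icc] at ht
      rw [(hψ' t).deriv]
      have hkey := key t ⟨le_of_lt ht.1, le_of_lt ht.2⟩
      have e2 : ⟪gradient f (x + t • h), h⟫ - a - t * b
          = ⟪gradient f (x + t • h) - gradient f x - t • H h, h⟫ := by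
        rw [ha, hb, inner_sub_left, inner_sub_left, real_inner_smul_left,
          real_inner_comm h (H h)]
      rw [e2]
      have hib : |⟪gradient f (x + t • h) - gradient f x - t • H h, h⟫|
          ≤ ‖gradient f (x + t • h) - gradient f x - t • H h‖ * ‖h‖ :=
        abs_real_inner_le_norm _ _
      have hnn : ‖gradient f (x + t • h) - gradient f x - t • H h‖ * ‖h‖
          ≤ ρ * t ^ 2 * ‖h‖ ^ 2 * ‖h‖ := by
        have := norm_nonneg h; nlinarith [hkey, norm_nonneg h]
      have := neg_abs_le ⟪gradient f (x + t • h) - gradient f x - t • H h, h⟫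
      nlinarith [norm_nonneg h]
  have h01 := mono (Set.left_mem_Icc.mpr zero_le_one)
    (Set.right_mem_Icc.mpr zero_le_one) zero_le_one
  have hψ0 : ψ 0 = 0 := by simp [hψdef]
  have hψ1 : ψ 1 = f (x + h) - f x - a - b / 2 + ρ * ‖h‖ ^ 3 / 3 := by
    simp [hψdef]; ring
  rw [hψ0, hψ1] at h01
  -- numerics
  have hε0 : 0 < ε := by rw [hε]; positivity
  have hr0 : 0 < r := by rw [hr]; positivity
  have hr3 : r ^ 3 = δ / ρ := by
    rw [hr, ← Real.rpow_natCast _ 3, ← Real.rpow_mul (by positivity)]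
    norm_num
  have hε3 : ε ^ 3 = δ ^ 2 * ρ := by
    rw [hε, ← Real.rpow_natCast _ 3, ← Real.rpow_mul (by positivity)]
    norm_num
  have hεr : ε * r = δ := by
    have h0 : (0:ℝ) ≤ ε * r := by positivity
    have h3 : (ε * r) ^ 3 = δ ^ 3 := by
      rw [mul_pow, hε3, hr3]; field_simp
    calc ε * r = ((ε * r) ^ 3) ^ ((1:ℝ)/3) := by
          rw [← Real.rpow_natCast (ε * r) 3, ← Real.rpow_mul h0]; norm_num
      _ = (δ ^ 3) ^ ((1:ℝ)/3) := by rw [h3]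
      _ = δ := by
          rw [← Real.rpow_natCast δ 3, ← Real.rpow_mul hδ.le]; norm_num
  have hρr : ρ * r ^ 3 = δ := by rw [hr3]; field_simp
  have hA : Real.sqrt (ρ * ε) * r ^ 2 = δ := by
    have h0 : (0:ℝ) ≤ Real.sqrt (ρ * ε) * r ^ 2 := by positivity
    have hs : Real.sqrt (ρ * ε) ^ 2 = ρ * ε := Real.sq_sqrt (by positivity)
    have h6 : (Real.sqrt (ρ * ε) * r ^ 2) ^ 6 = δ ^ 6 := by
      have e1 : (Real.sqrt (ρ * ε) * r ^ 2) ^ 6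
          = (Real.sqrt (ρ * ε) ^ 2) ^ 3 * (r ^ 3) ^ 4 := by ring
      rw [e1, hs, hr3, mul_pow, hε3, div_pow]
      field_simp
    calc Real.sqrt (ρ * ε) * r ^ 2
        = ((Real.sqrt (ρ * ε) * r ^ 2) ^ 6) ^ ((1:ℝ)/6) := by
          rw [← Real.rpow_natCast _ 6, ← Real.rpow_mul h0]; norm_num
      _ = (δ ^ 6) ^ ((1:ℝ)/6) := by rw [h6]
      _ = δ := by rw [← Real.rpow_natCast δ 6, ← Real.rpow_mul hδ.le]; norm_num
  -- bounds
  have hI1 : a ≥ -δ := by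
    have h1 : |a| ≤ ‖gradient f x‖ * ‖h‖ := abs_real_inner_le_norm _ _
    have h2 : ‖gradient f x‖ * ‖h‖ ≤ ε * r := by
      apply mul_le_mul hgrad.le hh (norm_nonneg _) hε0.le
    have := neg_abs_le a
    linarith [hεr ▸ h2]
  have hI2 : b ≥ -δ := by
    have h1 := hhess h
    have h2 : Real.sqrt (ρ * ε) * ‖h‖ ^ 2 ≤ Real.sqrt (ρ * ε) * r ^ 2 := by
      gcongr
    rw [hA] at h2
    rw [hb]
    linarith
  have hI3 : ρ * ‖h‖ ^ 3 ≤ δ := by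
    have h2 : ρ * ‖h‖ ^ 3 ≤ ρ * r ^ 3 := by
      gcongr
    linarith [hρr ▸ h2]
  linarith
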